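/- Let K ⊆ ℝⁿ be any set, y a tms of degree d with nonempty set meas(y,K) of representing K-measures. If μ is an extreme point of the convex set meas(y,K), then μ is finitely atomic with |supp(μ)| ≤ binom(n+d, d). -/

import Mathlib

open MeasureTheory MvPolynomial

/-- Total degree of a multi-index. -/
def mdeg {n : ℕ} (α : Fin n →₀ ℕ) : ℕ := α.sum fun _ k => k

/-- `measSet K d y` : the set of nonnegative Borel measures supported in `K`
representing the tms `y` of degree `d`. -/
def measSet {n : ℕ} (K : Set (Fin n → ℝ)) (d : ℕ) (y : (Fin n →₀ ℕ) → ℝ) :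
    Set (Measure (Fin n → ℝ)) :=
  {μ | μ Kᶜ = 0 ∧ ∀ α : Fin n →₀ ℕ, mdeg α ≤ d →
      Integrable (fun x => ∏ i, x i ^ α i) μ ∧ (∫ x, ∏ i, x i ^ α i ∂μ) = y α}


set_option linter.unusedSectionVars false

section Split
variable {X : Type*} [MetricSpace X] [SecondCountableTopology X]
  [MeasurableSpace X] [BorelSpace X]

/-- The complement of the topological support is null. -/
lemma compl_support_null (ρ : Measure X) :
    ρ {x | ∀ U : Set X, IsOpen U → x ∈ U → 0 < ρ U}ᶜ = 0 := by
  obtain ⟨B, hBc, -, hB⟩ := TopologicalSpace.exists_countable_basis X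
  set C : Set (Set X) := {U ∈ B | ρ U = 0} with hC
  have hsub : {x | ∀ U : Set X, IsOpen U → x ∈ U → 0 < ρ U}ᶜ ⊆ ⋃ U ∈ C, U := by
    intro x hx
    simp only [Set.mem_compl_iff, Set.mem_setOf_eq, not_forall] at hx
    obtain ⟨U, hUo, hxU, hU⟩ := hx
    have hU0 : ρ U = 0 := by
      simpa [pos_iff_ne_zero] using hU
    obtain ⟨V, hVB, hxV, hVU⟩ := hB.exists_subset_of_mem_open hxU hUo
    exact Set.mem_biUnion ⟨hVB, le_antisymm (hU0 ▸ measure_mono hVU) zero_le⟩ hxV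
  refine measure_mono_null hsub ?_
  rw [measure_biUnion_null_iff (hBc.mono fun U hU => hU.1)]
  exact fun U hU => hU.2

/-- A nonzero measure without point atoms has two disjoint positive measurable sets. -/
lemma exists_two_disjoint (ρ : Measure X) (hatom : ∀ x : X, ρ {x} = 0)
    (hpos : 0 < ρ Set.univ) :
    ∃ u v : Set X, MeasurableSet u ∧ MeasurableSet v ∧ Disjoint u v ∧
      0 < ρ u ∧ 0 < ρ v := by
  set T := {x | ∀ U : Set X, IsOpen U → x ∈ U → 0 < ρ U} with hT
  have hTc : ρ Tᶜ = 0 := compl_support_null ρ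
  -- there are two distinct points in T
  have h2 : ∃ x ∈ T, ∃ y ∈ T, x ≠ y := by
    by_contra hcon
    push_neg at hcon
    rcases Set.eq_empty_or_nonempty T with hTe | ⟨x₀, hx₀⟩
    · have : ρ Set.univ = 0 := by
        refine measure_mono_null (fun x _ => ?_) hTc
        intro hx
        exact absurd (hTe ▸ hx : x ∈ (∅ : Set X)) (Set.notMem_empty x)
      exact absurd this hpos.ne'
    · have hsub : Set.univ ⊆ {x₀} ∪ Tᶜ := by
        intro x _
        by_cases hx : x ∈ T
        · exact Or.inl (hcon x hx x₀ hx₀)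
        · exact Or.inr hx
      have : ρ Set.univ ≤ ρ {x₀} + ρ Tᶜ :=
        le_trans (measure_mono hsub) (measure_union_le _ _)
      rw [hatom x₀, hTc] at this
      simpa using lt_of_lt_of_le hpos this
  obtain ⟨x, hx, y, hy, hxy⟩ := h2
  set r : ℝ := dist x y / 2 with hr
  have hrpos : 0 < r := by
    have := dist_pos.mpr hxy
    positivity
  refine ⟨Metric.ball x r, Metric.ball y r, measurableSet_ball, measurableSet_ball,
    Metric.ball_disjoint_ball (by rw [hr]; linarith), ?_, ?_⟩
  · exact hx _ Metric.isOpen_ball (Metric.mem_ball_self hrpos)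
  · exact hy _ Metric.isOpen_ball (Metric.mem_ball_self hrpos)

/-- An atomless measure giving positive mass to a measurable set `s` admits `m`
pairwise disjoint positive-measure measurable subsets of `s`. -/
lemma exists_disjoint_family (m : ℕ) :
    ∀ (ν : Measure X), (∀ x : X, ν {x} = 0) → ∀ s : Set X, MeasurableSet s → 0 < ν s →
    ∃ A : Fin m → Set X, (∀ i, MeasurableSet (A i) ∧ A i ⊆ s ∧ 0 < ν (A i)) ∧
      ∀ i j, i ≠ j → Disjoint (A i) (A j) := by
  induction m with
  | zero =>
    intro ν _ s _ _
    exact ⟨fun i => i.elim0, fun i => i.elim0, fun i => i.elim0⟩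
  | succ m ih =>
    intro ν hatom s hs hpos
    set ρ := ν.restrict s with hρ
    have hρatom : ∀ x : X, ρ {x} = 0 := fun x => by
      rw [hρ, Measure.restrict_apply (measurableSet_singleton x)]
      exact measure_mono_null Set.inter_subset_left (hatom x)
    have hρpos : 0 < ρ Set.univ := by
      rwa [hρ, Measure.restrict_apply MeasurableSet.univ, Set.univ_inter]
    obtain ⟨u, v, hu, hv, huv, hupos, hvpos⟩ := exists_two_disjoint ρ hρatom hρpos
    have hupos' : 0 < ν (s ∩ u) := by
      rw [hρ, Measure.restrict_apply hu, Set.inter_comm] at hupos; exact hupos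
    have hvpos' : 0 < ν (s ∩ v) := by
      rw [hρ, Measure.restrict_apply hv, Set.inter_comm] at hvpos; exact hvpos
    obtain ⟨A', hA', hA'd⟩ := ih ν hatom (s ∩ u) (hs.inter hu) hupos'
    have key : ∀ j : Fin m, Disjoint (s ∩ v) (A' j) := fun j =>
      Set.disjoint_of_subset Set.inter_subset_right ((hA' j).2.1.trans Set.inter_subset_right)
        huv.symm
    refine ⟨Fin.cons (s ∩ v) A', ?_, ?_⟩
    · intro i
      refine Fin.cases ?_ ?_ i
      · exact ⟨hs.inter hv, Set.inter_subset_left, hvpos'⟩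
      · intro j
        simp only [Fin.cons_succ]
        exact ⟨(hA' j).1, (hA' j).2.1.trans Set.inter_subset_left, (hA' j).2.2⟩
    · intro i j hij
      induction i using Fin.cases with
      | zero =>
        induction j using Fin.cases with
        | zero => exact absurd rfl hij
        | succ j' => simpa using key j'
      | succ i' =>
        induction j using Fin.cases with
        | zero => simpa using (key i').symm
        | succ j' =>
          simpa using hA'd i' j' (fun h => hij (congrArg Fin.succ h))



section Split2
variable {X : Type*} [MetricSpace X] [SecondCountableTopology X]
  [MeasurableSpace X] [BorelSpace X]

/-- If a measure is not carried by `N` points, there are `N+1` disjoint positive sets. -/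
lemma exists_disjoint_of_not_finitely_atomic (μ : Measure X) (N : ℕ)
    (h : ¬ ∃ s : Finset X, μ (↑s : Set X)ᶜ = 0 ∧ s.card ≤ N) :
    ∃ A : Fin (N + 1) → Set X, (∀ i, MeasurableSet (A i) ∧ 0 < μ (A i)) ∧
      ∀ i j, i ≠ j → Disjoint (A i) (A j) := by
  classical
  set D : Set X := {x | μ {x} ≠ 0} with hD
  by_cases hDc : μ Dᶜ = 0
  · -- purely atomic case: D has more than N points
    have hnt : ¬ ∃ t : Finset X, D ⊆ ↑t ∧ t.card ≤ N := by
      rintro ⟨t, htD, htc⟩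
      exact h ⟨t, measure_mono_null (Set.compl_subset_compl.mpr htD) hDc, htc⟩
    have hbig : ∃ t : Finset X, ↑t ⊆ D ∧ t.card = N + 1 := by
      by_cases hDf : D.Finite
      · have h1 : N + 1 ≤ hDf.toFinset.card := by
          by_contra hlt
          exact hnt ⟨hDf.toFinset, by simp, by omega⟩
        obtain ⟨t, ht, htc⟩ := Finset.exists_subset_card_eq h1
        exact ⟨t, fun x hx => by simpa using hDf.mem_toFinset.mp (ht hx), htc⟩
      · obtain ⟨t, ht, htc⟩ := Set.Infinite.exists_subset_card_eq hDf (N + 1)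
        exact ⟨t, ht, htc⟩
    obtain ⟨t, htD, htc⟩ := hbig
    let e : Fin (N + 1) → X := fun i => (t.equivFin.symm (Fin.cast htc.symm i) : X)
    have he : Function.Injective e := fun i j hij => by
      have := t.equivFin.symm.injective (Subtype.val_injective hij)
      simpa [Fin.ext_iff] using this
    refine ⟨fun i => {e i}, fun i => ⟨measurableSet_singleton _, ?_⟩, fun i j hij => ?_⟩
    · have : e i ∈ D := htD (t.equivFin.symm _).2
      exact pos_iff_ne_zero.mpr this
    · exact Set.disjoint_singleton.mpr fun hc => hij (he hc)
  · -- diffuse part is nonzero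
    set ν := μ.restrict Dᶜ with hν
    have hatom : ∀ x : X, ν {x} = 0 := fun x => by
      rw [hν, Measure.restrict_apply (measurableSet_singleton x)]
      by_cases hx : x ∈ D
      · have : {x} ∩ Dᶜ = ∅ := by
          ext z
          simp only [Set.mem_inter_iff, Set.mem_singleton_iff, Set.mem_compl_iff,
            Set.mem_empty_iff_false, iff_false, not_and]
          rintro rfl
          simpa using hx
        simp [this]
      · refine measure_mono_null Set.inter_subset_left ?_
        simpa [hD] using hx
    have hpos : 0 < ν Set.univ := by
      rw [hν, Measure.restrict_apply MeasurableSet.univ, Set.univ_inter]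
      exact pos_iff_ne_zero.mpr hDc
    obtain ⟨A, hA, hAd⟩ :=
      exists_disjoint_family (N + 1) ν hatom Set.univ MeasurableSet.univ hpos
    refine ⟨A, fun i => ⟨(hA i).1, ?_⟩, hAd⟩
    have := (hA i).2.2
    rw [hν, Measure.restrict_apply (hA i).1] at this
    exact lt_of_lt_of_le this (measure_mono Set.inter_subset_left)

end Split2


lemma exists_inj_sym (n d : ℕ) :
    ∃ φ : {α : Fin n →₀ ℕ // mdeg α ≤ d} → Sym (Fin (n + 1)) d, Function.Injective φ := by
  classical
  refine ⟨fun α => ⟨(Finsupp.toMultiset α.1).map Fin.castSucc +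
      Multiset.replicate (d - mdeg α.1) (Fin.last n), ?_⟩, ?_⟩
  · have hc : Multiset.card (Finsupp.toMultiset α.1) = mdeg α.1 :=
      Finsupp.card_toMultiset α.1
    simp only [Multiset.card_add, Multiset.card_map, Multiset.card_replicate, hc]
    have := α.2
    omega
  · intro α β hab
    have h := congrArg Subtype.val hab
    simp only at h
    have key : ∀ i : Fin n, α.1 i = β.1 i := by
      intro i
      have hcount := congrArg (Multiset.count (Fin.castSucc i)) h
      have hne : (Fin.castSucc i : Fin (n + 1)) ≠ Fin.last n :=
        Fin.ne_of_lt (Fin.castSucc_lt_last i)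
      simpa [Multiset.count_add, Multiset.count_map_eq_count' _ _
        (Fin.castSucc_injective n), Multiset.count_replicate, hne,
        Finsupp.count_toMultiset, Ne.symm hne] using hcount
    exact Subtype.ext (Finsupp.ext key)

lemma card_sym_fin (n d : ℕ) :
    Fintype.card (Sym (Fin (n + 1)) d) = (n + d).choose d := by
  rw [Sym.card_sym_eq_multichoose, Fintype.card_fin, Nat.multichoose_eq]
  congr 1
  omega


/-- An extreme point of the convex set `meas(y,K)` is finitely atomic, with at most
`binom(n+d,d)` atoms. -/
theorem extreme_point_finitely_atomic {n d : ℕ} (K : Set (Fin n → ℝ))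
    (y : (Fin n →₀ ℕ) → ℝ) (hne : (measSet K d y).Nonempty)
    (μ : Measure (Fin n → ℝ)) (hμ : μ ∈ measSet K d y)
    (hext : ∀ μ₁ μ₂ : Measure (Fin n → ℝ), μ₁ ∈ measSet K d y → μ₂ ∈ measSet K d y →
      μ = (2 : ENNReal)⁻¹ • μ₁ + (2 : ENNReal)⁻¹ • μ₂ → μ₁ = μ₂) :
    ∃ s : Finset (Fin n → ℝ), μ (↑s : Set (Fin n → ℝ))ᶜ = 0 ∧ s.card ≤ (n + d).choose d := by
  classical
  by_contra hcon
  obtain ⟨hK, hmom⟩ := hμ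
  -- μ is a finite measure
  haveI hfin : IsFiniteMeasure μ := by
    refine ⟨?_⟩
    have h0 : mdeg (0 : Fin n →₀ ℕ) ≤ d := by simp [mdeg, Finsupp.sum_zero_index]
    have h1 := (hmom 0 h0).1
    simp only [Finsupp.coe_zero, Pi.zero_apply, pow_zero, Finset.prod_const_one] at h1
    rcases (integrable_const_iff).mp h1 with h | h
    · norm_num at h
    · exact h.measure_univ_lt_top
  set N := (n + d).choose d with hN
  obtain ⟨A, hA, hAd⟩ := exists_disjoint_of_not_finitely_atomic μ N hcon
  -- the moment vectors of the restrictions are linearly dependent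
  obtain ⟨φ, hφ⟩ := exists_inj_sym n d
  haveI : Fintype {α : Fin n →₀ ℕ // mdeg α ≤ d} := Fintype.ofInjective φ hφ
  have hcard : Fintype.card {α : Fin n →₀ ℕ // mdeg α ≤ d} ≤ N :=
    (Fintype.card_le_of_injective φ hφ).trans_eq (card_sym_fin n d)
  set v : Fin (N + 1) → ({α : Fin n →₀ ℕ // mdeg α ≤ d} → ℝ) :=
    fun i α => ∫ x in A i, ∏ j, x j ^ (α.1 j) ∂μ with hv
  have hnli : ¬ LinearIndependent ℝ v := by
    intro hli
    have h1 := hli.fintype_card_le_finrank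
    rw [Module.finrank_pi] at h1
    simp only [Fintype.card_fin] at h1
    omega
  obtain ⟨g, hgsum, i0, hgi0⟩ := Fintype.not_linearIndependent_iff.mp hnli
  -- normalize the coefficients
  set M : ℝ := Finset.univ.sup' ⟨i0, Finset.mem_univ i0⟩ (fun i => |g i|) with hM
  have hMpos : 0 < M := by
    rw [hM]
    exact lt_of_lt_of_le (abs_pos.mpr hgi0)
      (Finset.le_sup' (fun i => |g i|) (Finset.mem_univ i0))
  set c : Fin (N + 1) → ℝ := fun i => g i / M with hc
  have hc1 : ∀ i, |c i| ≤ 1 := fun i => by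
    rw [hc, abs_div, abs_of_pos hMpos, div_le_one hMpos, hM]
    exact Finset.le_sup' (fun i => |g i|) (Finset.mem_univ i)
  have hci0 : c i0 ≠ 0 := div_ne_zero hgi0 hMpos.ne'
  have hcsum : ∀ α : {α : Fin n →₀ ℕ // mdeg α ≤ d}, ∑ i, c i * v i α = 0 := by
    intro α
    have h1 : ∑ i, g i * v i α = 0 := by
      have := congrFun hgsum α
      simpa [Finset.sum_apply] using this
    simp only [hc, div_mul_eq_mul_div, ← Finset.sum_div, h1, zero_div]
  -- the decomposition of μ
  set U : Set (Fin n → ℝ) := ⋃ i, A i with hU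
  have hUm : MeasurableSet U := MeasurableSet.iUnion fun i => (hA i).1
  have hrestr : μ = μ.restrict Uᶜ + ∑ i, μ.restrict (A i) := by
    have h1 : μ.restrict U = ∑ i, μ.restrict (A i) := by
      rw [hU, Measure.restrict_iUnion (fun i j hij => hAd i j hij) (fun i => (hA i).1),
        Measure.sum_fintype]
    rw [← h1, add_comm, Measure.restrict_add_restrict_compl hUm]
  -- the perturbed measures
  have hmem : ∀ c' : Fin (N + 1) → ℝ, (∀ i, |c' i| ≤ 1) →
      (∀ α : {α : Fin n →₀ ℕ // mdeg α ≤ d}, ∑ i, c' i * v i α = 0) →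
      (μ.restrict Uᶜ + ∑ i, ENNReal.ofReal (1 + c' i) • μ.restrict (A i)) ∈ measSet K d y := by
    intro c' hc'1 hc'sum
    have h1pc : ∀ i, 0 ≤ 1 + c' i := fun i => by have := abs_le.mp (hc'1 i); linarith
    constructor
    · have hz : ∀ s : Set (Fin n → ℝ), μ.restrict s Kᶜ = 0 := fun s =>
        le_antisymm (le_trans (Measure.restrict_apply_le s Kᶜ) (le_of_eq hK)) zero_le
      simp [Measure.add_apply, Measure.coe_finset_sum, Finset.sum_apply, Measure.smul_apply, hz]
    · intro α hα
      have hInt := (hmom α hα).1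
      have hIntR : Integrable (fun x => ∏ j, x j ^ α j) (μ.restrict Uᶜ) := hInt.restrict
      have hIntA : ∀ i, Integrable (fun x => ∏ j, x j ^ α j) (μ.restrict (A i)) :=
        fun i => hInt.restrict
      have hIntS : Integrable (fun x => ∏ j, x j ^ α j)
          (∑ i, ENNReal.ofReal (1 + c' i) • μ.restrict (A i)) := by
        rw [integrable_finset_sum_measure]
        exact fun i _ => (hIntA i).smul_measure ENNReal.ofReal_ne_top
      constructor
      · exact hIntR.add_measure hIntS
      · have hbase : (∫ x, ∏ j, x j ^ α j ∂μ) =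
            (∫ x, ∏ j, x j ^ α j ∂(μ.restrict Uᶜ)) + ∑ i, v i ⟨α, hα⟩ := by
          conv_lhs => rw [hrestr]
          rw [integral_add_measure hIntR (integrable_finset_sum_measure.mpr fun i _ => hIntA i),
            integral_finset_sum_measure fun i _ => hIntA i]
        rw [integral_add_measure hIntR hIntS,
          integral_finset_sum_measure fun i _ => (hIntA i).smul_measure ENNReal.ofReal_ne_top]
        have hterm : ∀ i, (∫ x, ∏ j, x j ^ α j ∂(ENNReal.ofReal (1 + c' i) • μ.restrict (A i)))
            = v i ⟨α, hα⟩ + c' i * v i ⟨α, hα⟩ := by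
          intro i
          rw [integral_smul_measure, ENNReal.toReal_ofReal (h1pc i)]
          show (1 + c' i) • (∫ x in A i, ∏ j, x j ^ α j ∂μ) = _
          rw [smul_eq_mul]; ring
        rw [Finset.sum_congr rfl fun i _ => hterm i, Finset.sum_add_distrib, hc'sum ⟨α, hα⟩,
          add_zero, ← hbase]
        exact (hmom α hα).2
  set μ₁ := μ.restrict Uᶜ + ∑ i, ENNReal.ofReal (1 + c i) • μ.restrict (A i) with hμ₁
  set μ₂ := μ.restrict Uᶜ + ∑ i, ENNReal.ofReal (1 + (-c) i) • μ.restrict (A i) with hμ₂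
  have hmem1 : μ₁ ∈ measSet K d y := hmem c hc1 hcsum
  have hmem2 : μ₂ ∈ measSet K d y := by
    refine hmem (-c) (fun i => by simpa using hc1 i) (fun α => ?_)
    simp only [Pi.neg_apply, neg_mul, Finset.sum_neg_distrib, hcsum α, neg_zero]
  -- μ is the midpoint of μ₁ and μ₂
  have heq : μ = (2 : ENNReal)⁻¹ • μ₁ + (2 : ENNReal)⁻¹ • μ₂ := by
    have hco : ∀ i, (2 : ENNReal)⁻¹ * ENNReal.ofReal (1 + c i) +
        (2 : ENNReal)⁻¹ * ENNReal.ofReal (1 + (-c) i) = 1 := by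
      intro i
      have h1 := abs_le.mp (hc1 i)
      rw [← mul_add, ← ENNReal.ofReal_add (by linarith) (by simpa using (by linarith : 0 ≤ 1 - c i))]
      have h2 : (1 + c i) + (1 + (-c) i) = 2 := by simp; ring
      rw [h2]
      have : ENNReal.ofReal 2 = 2 := by norm_num
      rw [this, ENNReal.inv_mul_cancel two_ne_zero ENNReal.ofNat_ne_top]
    refine Measure.ext fun s hs => ?_
    have hL : μ s = μ.restrict Uᶜ s + ∑ i, μ.restrict (A i) s := by
      conv_lhs => rw [hrestr]
      simp [Measure.add_apply, Measure.coe_finset_sum, Finset.sum_apply]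
    rw [hL]
    simp only [Measure.add_apply, Measure.smul_apply, hμ₁, hμ₂, Measure.coe_finset_sum,
      Finset.sum_apply, Measure.smul_apply, smul_eq_mul]
    rw [mul_add, mul_add, Finset.mul_sum, Finset.mul_sum]
    have hhalf : (2 : ENNReal)⁻¹ * μ.restrict Uᶜ s + (2 : ENNReal)⁻¹ * μ.restrict Uᶜ s
        = μ.restrict Uᶜ s := by
      rw [← ENNReal.div_eq_inv_mul, ENNReal.add_halves]
    have hsum : ∀ i, (2 : ENNReal)⁻¹ * (ENNReal.ofReal (1 + c i) * μ.restrict (A i) s) +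
        (2 : ENNReal)⁻¹ * (ENNReal.ofReal (1 + (-c) i) * μ.restrict (A i) s)
        = μ.restrict (A i) s := by
      intro i
      rw [← mul_assoc, ← mul_assoc, ← add_mul, hco i, one_mul]
    calc μ.restrict Uᶜ s + ∑ i, μ.restrict (A i) s
        = ((2:ENNReal)⁻¹ * μ.restrict Uᶜ s + (2:ENNReal)⁻¹ * μ.restrict Uᶜ s)
          + ∑ i, ((2:ENNReal)⁻¹ * (ENNReal.ofReal (1 + c i) * μ.restrict (A i) s)
            + (2:ENNReal)⁻¹ * (ENNReal.ofReal (1 + (-c) i) * μ.restrict (A i) s)) := by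
          rw [hhalf, Finset.sum_congr rfl fun i _ => hsum i]
      _ = (2:ENNReal)⁻¹ * μ.restrict Uᶜ s
            + ∑ i, (2:ENNReal)⁻¹ * (ENNReal.ofReal (1 + c i) * μ.restrict (A i) s)
          + ((2:ENNReal)⁻¹ * μ.restrict Uᶜ s
            + ∑ i, (2:ENNReal)⁻¹ * (ENNReal.ofReal (1 + (-c) i) * μ.restrict (A i) s)) := by
          rw [Finset.sum_add_distrib]; ring
  have h12 := hext μ₁ μ₂ hmem1 hmem2 heq
  -- evaluate at A i0 to get a contradiction
  have hval : ∀ c' : Fin (N + 1) → ℝ,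
      (μ.restrict Uᶜ + ∑ i, ENNReal.ofReal (1 + c' i) • μ.restrict (A i)) (A i0)
      = ENNReal.ofReal (1 + c' i0) * μ (A i0) := by
    intro c'
    have hR : μ.restrict Uᶜ (A i0) = 0 := by
      rw [Measure.restrict_apply (hA i0).1]
      refine measure_mono_null (fun x hx => ?_) (measure_empty (μ := μ))
      exact (hx.2 (Set.mem_iUnion.mpr ⟨i0, hx.1⟩)).elim
    have hterm : ∀ j, ENNReal.ofReal (1 + c' j) * μ.restrict (A j) (A i0)
        = if j = i0 then ENNReal.ofReal (1 + c' i0) * μ (A i0) else 0 := by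
      intro j
      by_cases hji : j = i0
      · subst hji
        rw [Measure.restrict_apply (hA j).1, Set.inter_self, if_pos rfl]
      · rw [Measure.restrict_apply (hA i0).1,
          Set.disjoint_iff_inter_eq_empty.mp (hAd i0 j fun h => hji h.symm), measure_empty,
          mul_zero, if_neg hji]
    simp only [Measure.add_apply, Measure.coe_finset_sum, Finset.sum_apply, Measure.smul_apply,
      smul_eq_mul, hR, zero_add]
    rw [Finset.sum_congr rfl fun j _ => hterm j, Fintype.sum_eq_single i0 fun j hj => if_neg hj,
      if_pos rfl]
  have h1 := hval c
  have h2 := hval (-c)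
  rw [← hμ₁] at h1
  rw [← hμ₂] at h2
  rw [h12, h2] at h1
  have hmne : μ (A i0) ≠ 0 := (hA i0).2.ne'
  have hmnetop : μ (A i0) ≠ ⊤ := measure_ne_top μ _
  rw [ENNReal.mul_left_inj hmne hmnetop] at h1
  have h3 := abs_le.mp (hc1 i0)
  rw [ENNReal.ofReal_eq_ofReal_iff (by simpa using (by linarith : 0 ≤ 1 - c i0)) (by linarith)] at h1
  · simp only [Pi.neg_apply] at h1
    apply hci0
    linarith
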